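/- For every real constant c ≠ 0, the ordinary differential equation 2u'' = c² − u² has a nonconstant periodic solution: there exist a twice continuously differentiable function u : ℝ → ℝ and a real number T > 0 such that u(t + T) = u(t) for all t ∈ ℝ, u is not constant, and 2·u''(t) = c² − u(t)² for every t ∈ ℝ. -/

import Mathlib

open Real intervalIntegral Function MeasureTheory

noncomputable section

namespace OdeAux

def aa : ℝ := Real.sqrt 3 / 6

lemma aa_pos : 0 < aa := div_pos (Real.sqrt_pos.mpr (by norm_num)) (by norm_num)

def gg (x : ℝ) : ℝ := aa * (1 + Real.sin x ^ 2)

lemma gg_pos (x : ℝ) : 0 < gg x := by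
  have h := aa_pos
  unfold gg
  nlinarith [sq_nonneg (Real.sin x)]

def FF (x : ℝ) : ℝ := Real.sqrt (gg x)

lemma FF_pos (x : ℝ) : 0 < FF x := Real.sqrt_pos.mpr (gg_pos x)

lemma FF_sq (x : ℝ) : FF x ^ 2 = gg x := Real.sq_sqrt (gg_pos x).le

lemma gg_cont : Continuous gg := by
  unfold gg; fun_prop

lemma FF_cont : Continuous FF := Real.continuous_sqrt.comp gg_cont

lemma inv_FF_cont : Continuous fun x => (FF x)⁻¹ :=
  FF_cont.inv₀ fun x => (FF_pos x).ne'

lemma FF_le (x : ℝ) : FF x ≤ Real.sqrt (2 * aa) := by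
  apply Real.sqrt_le_sqrt
  have h := aa_pos
  have : Real.sin x ^ 2 ≤ 1 := sin_sq_le_one x
  unfold gg; nlinarith

lemma inv_FF_ge (x : ℝ) : (Real.sqrt (2 * aa))⁻¹ ≤ (FF x)⁻¹ :=
  inv_anti₀ (FF_pos x) (FF_le x)

lemma sqrt2aa_pos : 0 < Real.sqrt (2 * aa) := Real.sqrt_pos.mpr (by have := aa_pos; linarith)

def GG (x : ℝ) : ℝ := ∫ t in (0:ℝ)..x, (FF t)⁻¹

lemma intable (a b : ℝ) : IntervalIntegrable (fun t => (FF t)⁻¹) volume a b :=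
  inv_FF_cont.intervalIntegrable a b

lemma GG_hasDeriv (x : ℝ) : HasDerivAt GG (FF x)⁻¹ x :=
  intervalIntegral.integral_hasDerivAt_right (intable 0 x)
    (inv_FF_cont.stronglyMeasurableAtFilter volume (nhds x))
    inv_FF_cont.continuousAt

lemma GG_mono : StrictMono GG := by
  apply strictMono_of_deriv_pos
  intro x
  rw [(GG_hasDeriv x).deriv]
  exact inv_pos.mpr (FF_pos x)

lemma GG_diff : Differentiable ℝ GG := fun x => (GG_hasDeriv x).differentiableAt

lemma GG_cont : Continuous GG := GG_diff.continuous

lemma GG_zero : GG 0 = 0 := intervalIntegral.integral_same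

lemma GG_lower {x : ℝ} (hx : 0 ≤ x) : x * (Real.sqrt (2 * aa))⁻¹ ≤ GG x := by
  have h : ∀ t ∈ Set.Icc (0:ℝ) x, (Real.sqrt (2*aa))⁻¹ ≤ (FF t)⁻¹ := fun t _ => inv_FF_ge t
  have h2 := intervalIntegral.integral_mono_on hx
    (_root_.intervalIntegrable_const (c := (Real.sqrt (2*aa))⁻¹)) (intable 0 x) h
  rw [intervalIntegral.integral_const, smul_eq_mul, sub_zero] at h2
  exact h2

lemma FF_even (x : ℝ) : FF (-x) = FF x := by
  unfold FF gg; rw [Real.sin_neg]; ring_nf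

lemma GG_neg (x : ℝ) : GG (-x) = - GG x := by
  unfold GG
  have h := intervalIntegral.integral_comp_neg (a := x) (b := 0) (fun t => (FF t)⁻¹)
  rw [neg_zero] at h
  rw [← h, intervalIntegral.integral_symm]
  congr 1
  refine intervalIntegral.integral_congr fun t _ => ?_
  rw [FF_even]

lemma GG_surj : Function.Surjective GG := by
  have key : ∀ y : ℝ, 0 ≤ y → ∃ x, GG x = y := by
    intro y hy
    have hb : 0 ≤ Real.sqrt (2*aa) * y := mul_nonneg sqrt2aa_pos.le hy
    have h1 : GG 0 ≤ y := by rw [GG_zero]; exact hy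
    have h2 : y ≤ GG (Real.sqrt (2*aa) * y) := by
      have := GG_lower hb
      calc y = Real.sqrt (2*aa) * y * (Real.sqrt (2*aa))⁻¹ := by
                rw [mul_comm (Real.sqrt (2*aa)) y, mul_assoc,
                  mul_inv_cancel₀ sqrt2aa_pos.ne', mul_one]
           _ ≤ GG (Real.sqrt (2*aa) * y) := this
    have := intermediate_value_Icc hb GG_cont.continuousOn
    have hmem : y ∈ Set.Icc (GG 0) (GG (Real.sqrt (2*aa)*y)) := ⟨h1, h2⟩
    obtain ⟨x, _, hx⟩ := this hmem
    exact ⟨x, hx⟩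
  intro y
  rcases le_or_gt 0 y with hy | hy
  · exact key y hy
  · obtain ⟨x, hx⟩ := key (-y) (by linarith)
    exact ⟨-x, by rw [GG_neg, hx, neg_neg]⟩

lemma FFinv_per : Function.Periodic (fun x => (FF x)⁻¹) Real.pi := by
  intro x
  simp only [FF, gg, Real.sin_add_pi]
  ring_nf

lemma GG_add_pi (x : ℝ) : GG (x + Real.pi) = GG x + GG Real.pi := by
  have h1 : (∫ t in x..(x + Real.pi), (FF t)⁻¹) = ∫ t in (0:ℝ)..(0 + Real.pi), (FF t)⁻¹ :=
    FFinv_per.intervalIntegral_add_eq x 0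
  have h2 := intervalIntegral.integral_add_adjacent_intervals (intable 0 x) (intable x (x + Real.pi))
  unfold GG
  rw [← h2, h1, zero_add]

lemma GG_pi_pos : 0 < GG Real.pi := by
  have := GG_mono Real.pi_pos
  rwa [GG_zero] at this

/-- The inverse function of `GG`. -/
def EE : ℝ ≃o ℝ := StrictMono.orderIsoOfSurjective GG GG_mono GG_surj

def pp : ℝ → ℝ := fun y => EE.symm y

lemma GG_pp (y : ℝ) : GG (pp y) = y := by
  have := EE.apply_symm_apply y
  rwa [show (EE (EE.symm y)) = GG (EE.symm y) from congrFun (StrictMono.coe_orderIsoOfSurjective GG GG_mono GG_surj) _] at this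

lemma pp_GG (x : ℝ) : pp (GG x) = x := GG_mono.injective (by rw [GG_pp])

lemma pp_cont : Continuous pp := EE.symm.continuous

lemma pp_hasDeriv (y : ℝ) : HasDerivAt pp (FF (pp y)) y := by
  have h := HasDerivAt.of_local_left_inverse (pp_cont.continuousAt)
    (GG_hasDeriv (pp y)) (inv_ne_zero (FF_pos (pp y)).ne')
    (Filter.Eventually.of_forall GG_pp)
  simpa [inv_inv] using h

lemma pp_add_pi (t : ℝ) : pp (t + GG Real.pi) = pp t + Real.pi := by
  apply GG_mono.injective
  rw [GG_pp, GG_add_pi, GG_pp]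

lemma pp_zero : pp 0 = 0 := by have h := pp_GG 0; rwa [GG_zero] at h

lemma gg_contDiff {n : WithTop ℕ∞} : ContDiff ℝ n gg :=
  contDiff_const.mul (contDiff_const.add ((Real.contDiff_sin.of_le le_top).pow 2))

lemma FF_contDiff {n : WithTop ℕ∞} : ContDiff ℝ n FF :=
  contDiff_iff_contDiffAt.mpr fun x => (gg_contDiff.contDiffAt).sqrt (gg_pos x).ne'

lemma pp_diff : Differentiable ℝ pp := fun y => (pp_hasDeriv y).differentiableAt

lemma deriv_pp : deriv pp = fun y => FF (pp y) := funext fun y => (pp_hasDeriv y).deriv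

lemma pp_contDiff_one : ContDiff ℝ 1 pp := by
  rw [contDiff_one_iff_deriv]
  exact ⟨pp_diff, by rw [deriv_pp]; exact FF_cont.comp pp_cont⟩

lemma pp_contDiff_two : ContDiff ℝ 2 pp := by
  rw [show (2 : WithTop ℕ∞) = 1 + 1 from by norm_num, contDiff_succ_iff_deriv]
  refine ⟨pp_diff, by simp, ?_⟩
  rw [deriv_pp]
  exact FF_contDiff.comp pp_contDiff_one

lemma FF_hasDeriv (x : ℝ) :
    HasDerivAt FF (1 / (2 * FF x) * (aa * (2 * Real.sin x * Real.cos x))) x := by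
  have hs : HasDerivAt (fun y => Real.sin y ^ 2) (2 * Real.sin x * Real.cos x) x := by
    have := (Real.hasDerivAt_sin x).fun_pow 2
    refine this.congr_deriv ?_
    push_cast; ring
  have hg : HasDerivAt gg (aa * (2 * Real.sin x * Real.cos x)) x :=
    ((hs.const_add 1).const_mul aa).congr_deriv (by ring)
  exact (Real.hasDerivAt_sqrt (gg_pos x).ne').comp x hg

end OdeAux

open OdeAux

/-- For every real constant `c ≠ 0`, the ODE `2u'' = c² − u²` has a nonconstant
periodic solution. -/
theorem ode_has_nonconstant_periodic_solution (c : ℝ) (hc : c ≠ 0) :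
    ∃ (u : ℝ → ℝ) (T : ℝ), ContDiff ℝ 2 u ∧ 0 < T ∧
      (∀ t : ℝ, u (t + T) = u t) ∧
      (∃ t t' : ℝ, u t ≠ u t') ∧
      (∀ t : ℝ, 2 * deriv (deriv u) t = c ^ 2 - (u t) ^ 2) := by
  have hc' : 0 < |c| := abs_pos.mpr hc
  set α : ℝ := Real.sqrt (|c| / 2) with hαdef
  have hα : 0 < α := Real.sqrt_pos.mpr (by positivity)
  have hα2 : α ^ 2 = |c| / 2 := Real.sq_sqrt (by positivity)
  set A : ℝ := Real.sqrt 3 * |c| with hAdef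
  have hA : 0 < A := by positivity
  have hA2 : A ^ 2 = 3 * c ^ 2 := by
    rw [hAdef, mul_pow, Real.sq_sqrt (by norm_num : (3:ℝ) ≥ 0).le, sq_abs]
  have h3 : Real.sqrt 3 * Real.sqrt 3 = 3 := Real.mul_self_sqrt (by norm_num)
  have hsq3 : Real.sqrt 3 ^ 2 = 3 := Real.sq_sqrt (by norm_num)
  have habs2 : |c| ^ 2 = c ^ 2 := sq_abs c
  have hkey : A * aa * α ^ 2 = c ^ 2 / 4 := by
    rw [hαdef, Real.sq_sqrt (by positivity : (0:ℝ) ≤ |c| / 2), hAdef, aa]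
    have habs : |c| * |c| = c ^ 2 := by rw [← sq_abs]; ring
    field_simp
    nlinarith [habs]
  set p : ℝ → ℝ := fun t => pp (α * t) with hpdef
  set u : ℝ → ℝ := fun t => A * Real.sin (p t) ^ 2 with hudef
  have hp : ∀ t, HasDerivAt p (FF (p t) * α) t := by
    intro t
    have h1 : HasDerivAt (fun t : ℝ => α * t) α t := by
      simpa using (hasDerivAt_id t).const_mul α
    exact (pp_hasDeriv (α * t)).comp t h1
  have hu : ∀ t, HasDerivAt u
      ((A * 2 * α) * (Real.sin (p t) * Real.cos (p t) * FF (p t))) t := by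
    intro t
    have h1 : HasDerivAt (fun s => Real.sin (p s)) (Real.cos (p t) * (FF (p t) * α)) t :=
      (Real.hasDerivAt_sin (p t)).comp t (hp t)
    have h3 := (h1.fun_pow 2).const_mul A
    refine h3.congr_deriv ?_
    push_cast; ring
  set v : ℝ → ℝ := fun t => (A * 2 * α) * (Real.sin (p t) * Real.cos (p t) * FF (p t))
    with hvdef
  have hderivu : deriv u = v := funext fun t => (hu t).deriv
  refine ⟨u, GG Real.pi / α, ?_, div_pos GG_pi_pos hα, ?_, ?_, ?_⟩
  · -- ContDiff
    have h1 : ContDiff ℝ 2 (fun t : ℝ => α * t) := contDiff_const.mul contDiff_id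
    have h2 : ContDiff ℝ 2 p := pp_contDiff_two.comp h1
    exact contDiff_const.mul (((Real.contDiff_sin.of_le le_top).comp h2).pow 2)
  · -- periodic
    intro t
    have hT : α * (t + GG Real.pi / α) = α * t + GG Real.pi := by
      field_simp
    simp only [hudef, hpdef, hT, pp_add_pi, Real.sin_add_pi, neg_sq]
  · -- nonconstant
    refine ⟨GG (Real.pi / 2) / α, 0, ?_⟩
    have h1 : p (GG (Real.pi / 2) / α) = Real.pi / 2 := by
      simp only [hpdef]
      rw [mul_div_cancel₀ _ hα.ne', pp_GG]
    have h2 : p 0 = 0 := by simp only [hpdef, mul_zero, pp_zero]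
    simp only [hudef, h1, h2, Real.sin_pi_div_two, Real.sin_zero]
    norm_num
    exact hA.ne'
  · -- ODE
    intro t
    rw [hderivu]
    have hsin : HasDerivAt (fun s => Real.sin (p s)) (Real.cos (p t) * (FF (p t) * α)) t :=
      (Real.hasDerivAt_sin (p t)).comp t (hp t)
    have hcos : HasDerivAt (fun s => Real.cos (p s)) (-Real.sin (p t) * (FF (p t) * α)) t :=
      (Real.hasDerivAt_cos (p t)).comp t (hp t)
    have hFp : HasDerivAt (fun s => FF (p s))
        (1 / (2 * FF (p t)) * (aa * (2 * Real.sin (p t) * Real.cos (p t))) * (FF (p t) * α)) t :=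
      (FF_hasDeriv (p t)).comp t (hp t)
    have hvt := ((hsin.mul hcos).mul hFp).const_mul (A * 2 * α)
    rw [(show HasDerivAt v _ t from hvt).deriv]
    have hf : 0 < FF (p t) := FF_pos (p t)
    have hf2 : FF (p t) ^ 2 = aa * (1 + Real.sin (p t) ^ 2) := by
      have h := FF_sq (p t)
      simpa only [gg] using h
    have hsc1 : Real.sin (p t) ^ 2 + Real.cos (p t) ^ 2 = 1 := Real.sin_sq_add_cos_sq (p t)
    set s := Real.sin (p t)
    set co := Real.cos (p t)
    set f := FF (p t)
    show 2 * ((A * 2 * α) * ((co * (f * α) * co + s * (-s * (f * α))) * f +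
        s * co * (1 / (2 * f) * (aa * (2 * s * co)) * (f * α)))) = c ^ 2 - (A * s ^ 2) ^ 2
    have hterm : 1 / (2 * f) * (aa * (2 * s * co)) * (f * α) = aa * s * co * α := by
      field_simp
    rw [hterm]
    linear_combination (4 * A * α ^ 2 * (co ^ 2 - s ^ 2)) * hf2 +
      (4 * ((co ^ 2 - s ^ 2) * (1 + s ^ 2) + s ^ 2 * co ^ 2)) * hkey +
      (c ^ 2 * (1 + 2 * s ^ 2)) * hsc1 - (s ^ 2 * s ^ 2) * hA2 +
      (2 * s ^ 4 * |c| ^ 2) * hsq3 + (6 * s ^ 4) * habs2
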